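/- The (10,6,5)-LRC obtained by appending two local XOR parities to a (14,10) MDS code has minimum distance exactly 5. -/

import Mathlib

/-- The 16 columns of the (10,6,5)-LRC generator matrix
`G_LRC = [G | Σ_{i=1}^{5} g_i, Σ_{i=6}^{10} g_i]`. -/
def lrcCols {F : Type*} [Field F] (G : Matrix (Fin 10) (Fin 14) F) :
    Fin 16 → Fin 10 → F := fun j =>
  if h : (j : ℕ) < 14 then fun a => G a ⟨(j : ℕ), h⟩
  else if (j : ℕ) = 14 then
    ∑ i ∈ Finset.univ.filter (fun i : Fin 14 => (i : ℕ) < 5), fun a => G a i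
  else
    ∑ i ∈ Finset.univ.filter (fun i : Fin 14 => 5 ≤ (i : ℕ) ∧ (i : ℕ) < 10),
      fun a => G a i

/-- The (10,6,5)-LRC obtained by appending the two local XOR
parities to a (14,10) MDS code (whose 14 columns sum to zero) has minimum
distance exactly 5: any 4 column erasures still allow recovery of the message
from the surviving codeword coordinates, while some 5 erasures do not. -/
theorem stmt_15 (F : Type*) [Field F] [CharP F 2]
    (G : Matrix (Fin 10) (Fin 14) F)
    (hMDS : ∀ s : Finset (Fin 14), s.card = 10 →
      LinearIndependent F (fun j : ↥s => fun a => G a (j : Fin 14)))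
    (hsum : ∑ j : Fin 14, (fun a => G a j) = (0 : Fin 10 → F)) :
    (∀ E : Finset (Fin 16), E.card ≤ 4 →
      ∀ x y : Fin 10 → F,
        (∀ j ∉ E, ∑ a, x a * lrcCols G j a = ∑ a, y a * lrcCols G j a) → x = y) ∧
    (∃ E : Finset (Fin 16), E.card = 5 ∧
      ∃ x y : Fin 10 → F, x ≠ y ∧
        ∀ j ∉ E, ∑ a, x a * lrcCols G j a = ∑ a, y a * lrcCols G j a) := by
  constructor
  · -- d ≥ 5
    intro E hE x y h
    set z : Fin 10 → F := fun a => x a - y a with hz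
    set E' : Finset (Fin 14) :=
      Finset.univ.filter (fun j : Fin 14 => (Fin.castLE (by norm_num) j : Fin 16) ∈ E) with hE'
    have hE'card : E'.card ≤ 4 := by
      have h1 : (E'.image (Fin.castLE (show 14 ≤ 16 by norm_num))).card = E'.card :=
        Finset.card_image_of_injective _ (Fin.castLE_injective _)
      have h2 : E'.image (Fin.castLE (by norm_num)) ⊆ E := by
        intro j hj
        simp only [Finset.mem_image] at hj
        obtain ⟨i, hi, rfl⟩ := hj
        simpa [hE'] using hi
      calc E'.card = _ := h1.symm
        _ ≤ E.card := Finset.card_le_card h2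
        _ ≤ 4 := hE
    have hScard : 10 ≤ (Finset.univ \ E').card := by
      have := Finset.card_sdiff_of_subset (Finset.subset_univ E')
      simp only [Finset.card_univ, Fintype.card_fin] at this
      omega
    obtain ⟨s, hsub, hs10⟩ := Finset.exists_subset_card_eq hScard
    -- z is orthogonal to the columns indexed by s
    have horth : ∀ j ∈ s, ∑ a, z a * G a j = 0 := by
      intro j hj
      have hjE : (Fin.castLE (by norm_num) j : Fin 16) ∉ E := by
        have := hsub hj
        simp only [hE', Finset.mem_sdiff, Finset.mem_filter, Finset.mem_univ,
          true_and] at this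
        exact this
      have hcol : ∀ a, lrcCols G (Fin.castLE (by norm_num) j) a = G a j := by
        intro a
        have hlt : ((Fin.castLE (show 14 ≤ 16 by norm_num) j : Fin 16) : ℕ) < 14 := by
          simpa using j.isLt
        simp only [lrcCols, dif_pos hlt]
        congr 1
      have heq := h _ hjE
      simp only [hcol] at heq
      simp only [hz, sub_mul, Finset.sum_sub_distrib, heq, sub_self]
    -- columns indexed by s span everything
    have hli := hMDS s hs10
    have hspan : Submodule.span F (Set.range (fun j : ↥s => fun a => G a (j : Fin 14))) = ⊤ := by
      apply hli.span_eq_top_of_card_eq_finrank'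
      rw [Fintype.card_coe, hs10, Module.finrank_fin_fun]
    have hzero : ∀ v : Fin 10 → F, ∑ a, z a * v a = 0 := by
      intro v
      have hv : v ∈ Submodule.span F
          (Set.range (fun j : ↥s => fun a => G a (j : Fin 14))) := by
        rw [hspan]; trivial
      induction hv using Submodule.span_induction with
      | mem w hw =>
        obtain ⟨⟨j, hj⟩, rfl⟩ := hw
        exact horth j hj
      | zero => simp
      | add w₁ w₂ _ _ ih1 ih2 =>
        simp only [Pi.add_apply, mul_add, Finset.sum_add_distrib, ih1, ih2, add_zero]
      | smul c w _ ih =>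
        simp only [Pi.smul_apply, smul_eq_mul]
        rw [show (∑ a, z a * (c * w a)) = c * ∑ a, z a * w a by
          rw [Finset.mul_sum]; exact Finset.sum_congr rfl fun a _ => by ring]
        rw [ih, mul_zero]
    funext a
    have := hzero (Pi.single a 1)
    have hza : z a = 0 := by
      rwa [Finset.sum_eq_single a (by
        intro b _ hb
        simp [Pi.single_apply, hb]) (by simp), Pi.single_eq_same, mul_one] at this
    exact sub_eq_zero.mp hza
  · -- d ≤ 5
    -- the extended square matrix with columns g_5,...,g_13 and a zero column
    set M : Matrix (Fin 10) (Fin 10) F := fun a j =>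
      if h : (j : ℕ) < 9 then G a ⟨(j : ℕ) + 5, by omega⟩ else 0 with hM
    have hdet : M.det = 0 := by
      apply Matrix.det_eq_zero_of_column_eq_zero ⟨9, by norm_num⟩
      intro a
      simp only [hM]
      exact dif_neg (by norm_num)
    obtain ⟨v, hv0, hv⟩ := Matrix.exists_vecMul_eq_zero_iff.mpr hdet
    -- v is orthogonal to g_j for all 5 ≤ j < 14
    have horth : ∀ j : Fin 14, 5 ≤ (j : ℕ) → ∑ a, v a * G a j = 0 := by
      intro j hj
      have h9 : (j : ℕ) - 5 < 9 := by omega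
      have := congrFun hv ⟨(j : ℕ) - 5, by omega⟩
      simp only [Matrix.vecMul, dotProduct, hM, Pi.zero_apply] at this
      simp only [dif_pos h9] at this
      rw [← this]
      exact Finset.sum_congr rfl fun a _ => by
        congr 1
        exact congrArg (G a) (Fin.ext (by simp; omega)).symm
    refine ⟨{0, 1, 2, 3, 4}, by decide, v, 0, hv0, ?_⟩
    intro j hj
    have hj5 : 5 ≤ (j : ℕ) := by
      by_contra hlt
      push_neg at hlt
      apply hj
      have hEeq : ({0, 1, 2, 3, 4} : Finset (Fin 16)) =
          Finset.univ.filter (fun j : Fin 16 => (j : ℕ) < 5) := by decide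
      rw [hEeq, Finset.mem_filter]
      exact ⟨Finset.mem_univ _, hlt⟩
    simp only [Pi.zero_apply, zero_mul, Finset.sum_const_zero]
    -- per-column sums of v against all of G
    have hcolsum : ∑ i : Fin 14, ∑ a, v a * G a i = 0 := by
      rw [Finset.sum_comm]
      have : ∀ a : Fin 10, ∑ i : Fin 14, v a * G a i = 0 := by
        intro a
        rw [← Finset.mul_sum]
        have := congrFun hsum a
        simp only [Finset.sum_apply, Pi.zero_apply] at this
        rw [this, mul_zero]
      simp [this]
    rcases lt_or_ge (j : ℕ) 14 with h14 | h14
    · -- a surviving MDS column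
      simp only [lrcCols, dif_pos h14]
      exact horth ⟨(j : ℕ), h14⟩ hj5
    · rcases eq_or_lt_of_le h14 with h14e | h15
      · -- the first parity column
        simp only [lrcCols, dif_neg (by omega : ¬ (j : ℕ) < 14), if_pos h14e.symm]
        have hsplit := Finset.sum_filter_add_sum_filter_not Finset.univ
          (fun i : Fin 14 => (i : ℕ) < 5) (fun i => ∑ a, v a * G a i)
        rw [hcolsum] at hsplit
        have hrest : ∑ i ∈ Finset.univ.filter (fun i : Fin 14 => ¬ (i : ℕ) < 5),
            ∑ a, v a * G a i = 0 := by
          apply Finset.sum_eq_zero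
          intro i hi
          simp only [Finset.mem_filter, not_lt] at hi
          exact horth i hi.2
        have hfirst : ∑ i ∈ Finset.univ.filter (fun i : Fin 14 => (i : ℕ) < 5),
            ∑ a, v a * G a i = 0 := by
          rw [hrest, add_zero] at hsplit
          exact hsplit
        rw [← hfirst]
        rw [Finset.sum_comm]
        apply Finset.sum_congr rfl
        intro a _
        rw [Finset.sum_apply, Finset.mul_sum]
      · -- the second parity column
        have h15e : (j : ℕ) = 15 := by omega
        simp only [lrcCols, dif_neg (by omega : ¬ (j : ℕ) < 14),
          if_neg (by omega : ¬ (j : ℕ) = 14)]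
        rw [show (∑ a, v a * (∑ i ∈ Finset.univ.filter
              (fun i : Fin 14 => 5 ≤ (i : ℕ) ∧ (i : ℕ) < 10), fun b => G b i) a)
            = ∑ i ∈ Finset.univ.filter
              (fun i : Fin 14 => 5 ≤ (i : ℕ) ∧ (i : ℕ) < 10), ∑ a, v a * G a i from by
          rw [Finset.sum_comm]
          exact Finset.sum_congr rfl fun a _ => by
            rw [Finset.sum_apply, Finset.mul_sum]]
        apply Finset.sum_eq_zero
        intro i hi
        simp only [Finset.mem_filter] at hi
        exact horth i hi.2.1
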